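/- arXiv:2509.17014 — 2 statements merged into one kernel-verified Lean document; each statement's English description precedes it below -/
import Mathlib

section
/- A set of commuting, Hermitian, involutory, traceless operators T_1, …, T_n on an n-qubit Hilbert space, whose products T(t) = ∏_i T_i^{t_i} (for nonzero t ∈ {0,1}^n) are all traceless, can be simultaneously conjugated to the Pauli operators Z_1, …, Z_n: there exists a unitary U such that T_i = U Z_i U† for all i. -/
set_option maxHeartbeats 1000000


open Matrix BigOperators

/-- Operators on the `n`-qubit Hilbert space, as matrices indexed by computational
basis states. -/
abbrev QOp (n : ℕ) := Matrix (Fin n → Fin 2) (Fin n → Fin 2) ℂ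

/-- Pure states of `n` qubits, as amplitude functions on the computational basis. -/
abbrev QState (n : ℕ) := (Fin n → Fin 2) → ℂ

/-- `O` acts only on the qubits in `A`, i.e. `O = O_A ⊗ I` on the complement of `A`. -/
def ActsOn {n : ℕ} (O : QOp n) (A : Finset (Fin n)) : Prop :=
  (∀ x y : Fin n → Fin 2, (∃ i, i ∉ A ∧ x i ≠ y i) → O x y = 0) ∧
  (∀ x y x' y' : Fin n → Fin 2,
    (∀ i ∈ A, x i = x' i) → (∀ i ∈ A, y i = y' i) →
    (∀ i, i ∉ A → x i = y i) → (∀ i, i ∉ A → x' i = y' i) →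
    O x y = O x' y')

/-- The weight of an operator: the minimal size of a set of qubits supporting it
(the size of its support). -/
noncomputable def opWt {n : ℕ} (O : QOp n) : ℕ :=
  sInf {k | ∃ A : Finset (Fin n), ActsOn O A ∧ A.card = k}

/-- A single layer of `K`-bounded fan-in gates: a tensor product, over a partition of
the qubits into blocks of size at most `K`, of unitaries acting on the blocks. -/
def IsLayer {n : ℕ} (K : ℕ) (U : QOp n) : Prop :=
  ∃ (P : Finpartition (Finset.univ : Finset (Fin n))) (f : Finset (Fin n) → QOp n)
    (hc : (P.parts : Set (Finset (Fin n))).Pairwise fun A B => Commute (f A) (f B)),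
    (∀ A ∈ P.parts, A.card ≤ K ∧ f A ∈ Matrix.unitaryGroup (Fin n → Fin 2) ℂ ∧
      ActsOn (f A) A) ∧
    U = P.parts.noncommProd f hc

/-- A depth-`D` non-adaptive circuit with `K`-bounded fan-in gates. -/
def IsDepthCircuit {n : ℕ} (K D : ℕ) (U : QOp n) : Prop :=
  ∃ f : Fin D → QOp n, (∀ d, IsLayer K (f d)) ∧ U = (List.ofFn f).prod

/-- Pauli `X` on qubit `i`. -/
noncomputable def XOp (n : ℕ) (i : Fin n) : QOp n :=
  Matrix.of fun x y => if y = Function.update x i (x i + 1) then 1 else 0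

/-- Pauli `Z` on qubit `i`. -/
noncomputable def ZOp (n : ℕ) (i : Fin n) : QOp n :=
  Matrix.diagonal fun x => if x i = 0 then 1 else -1

/-- Pauli `Y` on qubit `i` (`Y = iXZ`). -/
noncomputable def YOp (n : ℕ) (i : Fin n) : QOp n := Complex.I • (XOp n i * ZOp n i)

/-- The four single-qubit Pauli operators `{I, X, Y, Z}` at site `i`. -/
noncomputable def PauliAt (n : ℕ) (i : Fin n) : Set (QOp n) :=
  {1, XOp n i, YOp n i, ZOp n i}

/-- `∏ i, (S i)^(t i)` for a family of operators and exponents `t : Fin d → Bool`. -/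
noncomputable def prodPow {d n : ℕ} (S : Fin d → QOp n) (t : Fin d → Bool) : QOp n :=
  (List.ofFn fun i => if t i then S i else 1).prod

/-- An `n`-qubit Pauli operator: a phase in `{±1, ±i}` times a tensor product of
single-qubit Pauli operators. -/
def IsPauli {n : ℕ} (P : QOp n) : Prop :=
  ∃ (c : ℂ) (f : Fin n → QOp n),
    (c = 1 ∨ c = -1 ∨ c = Complex.I ∨ c = -Complex.I) ∧
    (∀ i, f i ∈ PauliAt n i) ∧ P = c • (List.ofFn f).prod

/-- The all-zeros computational basis state `|0^n⟩`. -/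
noncomputable def ket0 (n : ℕ) : QState n := fun x => if x = fun _ => 0 then 1 else 0

/-- The computational basis state `|s⟩`. -/
noncomputable def basisKet {n : ℕ} (s : Fin n → Fin 2) : QState n := fun x => if x = s then 1 else 0

/-- Inner product `⟨χ|η⟩`. -/
noncomputable def qInner {n : ℕ} (χ η : QState n) : ℂ :=
  ∑ x, (starRingEnd ℂ) (χ x) * η x

/-- Expectation value `⟨ψ|O|ψ⟩`. -/
noncomputable def expectation {n : ℕ} (O : QOp n) (ψ : QState n) : ℂ :=
  ∑ x, (starRingEnd ℂ) (ψ x) * O.mulVec ψ x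

/-- Correlation function `Cor(O₁,O₂,|ψ⟩) = ⟨ψ|O₁O₂|ψ⟩ − ⟨ψ|O₁|ψ⟩⟨ψ|O₂|ψ⟩`. -/
noncomputable def Cor {n : ℕ} (O₁ O₂ : QOp n) (ψ : QState n) : ℂ :=
  expectation (O₁ * O₂) ψ - expectation O₁ ψ * expectation O₂ ψ

/-- Euclidean norm of a state vector. -/
noncomputable def vnorm {n : ℕ} (v : QState n) : ℝ :=
  Real.sqrt (∑ x, Complex.normSq (v x))

/-- The projector `|ψ⟩⟨ψ|`. -/
noncomputable def projOf {n : ℕ} (ψ : QState n) : QOp n :=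
  Matrix.of fun x y => ψ x * (starRingEnd ℂ) (ψ y)

/-- The stabilizer group of a state: all Pauli operators fixing it. -/
def stabGroup {n : ℕ} (ψ : QState n) : Set (QOp n) :=
  {P | IsPauli P ∧ P.mulVec ψ = ψ}

/-- `ψ` is a stabilizer state: a normalized common `+1` eigenstate of `n` independent
commuting Pauli operators. -/
def IsStabilizerState {n : ℕ} (ψ : QState n) : Prop :=
  (∑ x, Complex.normSq (ψ x) = 1) ∧
  ∃ S : Fin n → QOp n, (∀ i, IsPauli (S i)) ∧ (∀ i j, Commute (S i) (S j)) ∧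
    (∀ t : Fin n → Bool, prodPow S t = 1 → t = fun _ => false) ∧
    (∀ i, (S i).mulVec ψ = ψ)

/-- `S` is a set of stabilizer generators for `ψ`: each `S i` is a Pauli fixing `ψ`,
and every Pauli fixing `ψ` is a product of the `S i`. -/
def IsGenSet {n : ℕ} (ψ : QState n) (S : Fin n → QOp n) : Prop :=
  (∀ i, IsPauli (S i) ∧ (S i).mulVec ψ = ψ) ∧
  ∀ P : QOp n, IsPauli P → P.mulVec ψ = ψ → ∃ t : Fin n → Bool, P = prodPow S t

/-- The weights of the generators `S`, sorted in non-increasing order. -/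
noncomputable def sortedWts {n : ℕ} (S : Fin n → QOp n) : List ℕ :=
  (Multiset.sort
    ((Finset.univ.val : Multiset (Fin n)).map fun i => opWt (S i)) (· ≤ ·)).reverse

/-- `S` is a generating set of the stabilizer group of `ψ` whose sorted
(non-increasing) weight vector is lexicographically minimal. -/
def MinimalGenSet {n : ℕ} (ψ : QState n) (S : Fin n → QOp n) : Prop :=
  IsGenSet ψ S ∧ ∀ S' : Fin n → QOp n, IsGenSet ψ S' →
    ¬ List.Lex (· < ·) (sortedWts S') (sortedWts S)

/-- The Pauli correlation range `CR_P(|ψ⟩)`: the maximal size of a region `A` in which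
every pair of distinct qubits has a nonzero two-point Pauli correlation. -/
noncomputable def CRP {n : ℕ} (ψ : QState n) : ℕ :=
  sSup {k | ∃ A : Finset (Fin n), A.card = k ∧
    ∀ i ∈ A, ∀ j ∈ A, i ≠ j →
      ∃ Pi ∈ PauliAt n i, ∃ Pj ∈ PauliAt n j, Cor Pi Pj ψ ≠ 0}

/-- State weight: the minimum over all unitaries `U` preparing `ψ` from `|0^n⟩` of
the maximal weight of the generalized stabilizer generators `U Z_i U†`. -/
noncomputable def stateWt {n : ℕ} (ψ : QState n) : ℕ :=
  sInf {w | ∃ U : QOp n, U ∈ Matrix.unitaryGroup (Fin n → Fin 2) ℂ ∧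
    U.mulVec (ket0 n) = ψ ∧
    w = Finset.univ.sup fun i : Fin n => opWt (U * ZOp n i * star U)}

/-- Restriction of an `(n+k)`-bit string to its first `n` bits. -/
def frontBits {n k : ℕ} (u : Fin (n + k) → Fin 2) : Fin n → Fin 2 :=
  fun i => u (Fin.castAdd k i)

/-- Restriction of an `(n+k)`-bit string to its last `k` bits. -/
def backBits {n k : ℕ} (u : Fin (n + k) → Fin 2) : Fin k → Fin 2 :=
  fun i => u (Fin.natAdd n i)

/-- The operator `S ⊗ Z^z` on `n+k` qubits, where `Z^z = ⊗ᵢ Z_i^{z_i}` acts on the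
last `k` qubits. -/
noncomputable def kronZ {n k : ℕ} (S : QOp n) (z : Fin k → Bool) : QOp (n + k) :=
  Matrix.of fun u v =>
    S (frontBits u) (frontBits v) *
      (if backBits u = backBits v then
        ∏ i, (if z i = true ∧ backBits u i = 1 then (-1 : ℂ) else 1)
      else 0)

/-- The product `∏_{i ∈ A} Z_i` as a diagonal operator. -/
noncomputable def ZProd (n : ℕ) (A : Finset (Fin n)) : QOp n :=
  Matrix.diagonal fun x => ∏ i ∈ A, (if x i = 0 then (1 : ℂ) else -1)

/-- The `n`-qubit GHZ state `(|0…0⟩ + |1…1⟩)/√2`. -/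
noncomputable def ghz (n : ℕ) : QState n := fun x =>
  if (∀ i, x i = 0) ∨ (∀ i, x i = 1) then ((Real.sqrt 2 : ℝ) : ℂ)⁻¹ else 0

/-- The `n`-qubit W state. -/
noncomputable def wState (n : ℕ) : QState n := fun x =>
  if (Finset.univ.filter fun i => x i = 1).card = 1 then ((Real.sqrt n : ℝ) : ℂ)⁻¹ else 0

/-- The `n`-qubit hypergraph state `CZ_n |+⟩^{⊗n}`, where `CZ_n = I − 2|0⟩⟨0|^{⊗n}`. -/
noncomputable def hgState (n : ℕ) : QState n := fun x =>
  (if ∀ i, x i = 0 then (-1 : ℂ) else 1) * (((Real.sqrt 2)⁻¹ : ℝ) : ℂ) ^ n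

/-- Fidelity of `χ` with states prepared from `|0^n⟩` by circuits from the class `𝒱`. -/
noncomputable def Ffid {n : ℕ} (𝒱 : Set (QOp n)) (χ : QState n) : ℝ :=
  sSup ((fun V => ‖qInner χ (V.mulVec (ket0 n))‖ ^ 2) '' 𝒱)

/-- `F_{D,n}(χ)`: maximal fidelity of `χ` with outputs of depth-`D` circuits of
`K`-bounded fan-in gates applied to `|0^n⟩`. -/
noncomputable def FDn {n : ℕ} (K D : ℕ) (χ : QState n) : ℝ :=
  sSup ((fun U => ‖qInner χ (U.mulVec (ket0 n))‖ ^ 2) '' {U | IsDepthCircuit K D U})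

namespace GSAux
variable {n : ℕ}
noncomputable def eps {n : ℕ} (s : Fin n → Fin 2) (i : Fin n) : ℂ := if s i = 0 then 1 else -1

lemma eps_sq (s : Fin n → Fin 2) (i : Fin n) : eps s i * eps s i = 1 := by
  unfold eps; split <;> ring

lemma eps_conj (s : Fin n → Fin 2) (i : Fin n) : (starRingEnd ℂ) (eps s i) = eps s i := by
  unfold eps; split <;> simp

lemma eps_add (s s' : Fin n → Fin 2) (i : Fin n) (h : s i ≠ s' i) : eps s i + eps s' i = 0 := by
  unfold eps
  rcases (by omega : s i = 0 ∧ s' i = 1 ∨ s i = 1 ∧ s' i = 0) with ⟨h1, h2⟩ | ⟨h1, h2⟩ <;>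
    simp [h1, h2]

lemma eps_mul_ne (s s' : Fin n → Fin 2) (i : Fin n) (h : s i ≠ s' i) :
    eps s i * eps s' i = -1 := by
  unfold eps
  rcases (by omega : s i = 0 ∧ s' i = 1 ∨ s i = 1 ∧ s' i = 0) with ⟨h1, h2⟩ | ⟨h1, h2⟩ <;>
    simp [h1, h2]

lemma Mmul (T : QOp n) (hT : T * T = 1) (ε ε' : ℂ) :
    ((1 : QOp n) + ε • T) * (1 + ε' • T) = (1 + ε * ε') • (1 : QOp n) + (ε + ε') • T := by
  simp only [mul_add, add_mul, one_mul, mul_one, smul_mul_assoc, mul_smul_comm, smul_smul, hT]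
  module

lemma TmulM (T : QOp n) (hT : T * T = 1) (ε : ℂ) (hε : ε * ε = 1) :
    T * ((1 : QOp n) + ε • T) = ε • ((1 : QOp n) + ε • T) := by
  rw [mul_add, mul_one, mul_smul_comm, hT, smul_add, smul_smul, hε]
  module

lemma star_list_prod (l : List (QOp n)) (h1 : ∀ M ∈ l, star M = M)
    (h2 : l.Pairwise Commute) : star l.prod = l.prod := by
  induction l with
  | nil => simp
  | cons a t ih =>
    rw [List.pairwise_cons] at h2
    rw [List.prod_cons, StarMul.star_mul, ih (fun M hM => h1 M (List.mem_cons_of_mem a hM)) h2.2,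
      h1 a List.mem_cons_self]
    exact (Commute.list_prod_right t a (fun x hx => h2.1 x hx)).symm

end GSAux

open GSAux

/-- commuting, Hermitian, involutory operators all of whose nontrivial
products are traceless can be simultaneously conjugated to `Z_1, …, Z_n`. -/
theorem generalized_stabilizers_conjugate_to_Z {n : ℕ} (T : Fin n → QOp n)
    (hherm : ∀ i, (T i).IsHermitian)
    (hinv : ∀ i, T i * T i = 1)
    (htr : ∀ i, (T i).trace = 0)
    (hcomm : ∀ i j, Commute (T i) (T j))
    (htrProd : ∀ t : Fin n → Bool, t ≠ (fun _ => false) → (prodPow T t).trace = 0) :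
    ∃ U ∈ Matrix.unitaryGroup (Fin n → Fin 2) ℂ,
      ∀ i, T i = U * ZOp n i * star U := by
  set A := Algebra.adjoin ℂ (Set.range T) with hA
  letI : CommRing A := Algebra.adjoinCommRingOfComm ℂ (by
    rintro a ⟨i, rfl⟩ b ⟨j, rfl⟩; exact hcomm i j)
  have hTmem : ∀ i, T i ∈ A := fun i => Algebra.subset_adjoin ⟨i, rfl⟩
  set T' : Fin n → A := fun i => ⟨T i, hTmem i⟩ with hT'
  set e : (Fin n → Fin 2) → Fin n → A := fun s i => algebraMap ℂ A (eps s i) with he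
  set a : (Fin n → Fin 2) → Fin n → A := fun s i => 1 + e s i * T' i with ha
  set Q : (Fin n → Fin 2) → A := fun s => ∏ i, a s i with hQ
  -- val lemmas
  have hval_a : ∀ s i, ((a s i : A) : QOp n) = 1 + eps s i • T i := by
    intro s i
    show ((1 + e s i * T' i : A) : QOp n) = _
    push_cast
    rw [he]
    simp [Algebra.algebraMap_eq_smul_one, smul_mul_assoc]
    rfl
  have hval_mul : ∀ x y : A, ((x * y : A) : QOp n) = (x : QOp n) * y := fun _ _ => rfl
  have hval_e : ∀ s i (x : A), ((e s i * x : A) : QOp n) = eps s i • (x : QOp n) := by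
    intro s i x
    rw [hval_mul]
    show (algebraMap ℂ A (eps s i) : QOp n) * _ = _
    rw [Subalgebra.coe_algebraMap, Algebra.algebraMap_eq_smul_one, smul_mul_assoc, one_mul]
  -- list bridge
  have hlist : ∀ f : Fin n → A, ((∏ i, f i : A) : QOp n) = (List.ofFn fun i => (f i : QOp n)).prod := by
    intro f
    rw [← List.prod_ofFn (f := f)]
    show A.val _ = _
    rw [map_list_prod (A.val) _]
    simp [List.map_ofFn, Function.comp_def]
  -- lift of factor relations into A
  have h1A : ∀ s i, T' i * a s i = e s i * a s i := by
    intro s i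
    apply Subtype.ext
    rw [hval_mul, hval_e, hval_a]
    exact TmulM (T i) (hinv i) (eps s i) (eps_sq s i)
  have h2A : ∀ s s' i, s i ≠ s' i → a s i * a s' i = 0 := by
    intro s s' i h
    apply Subtype.ext
    rw [hval_mul, hval_a, hval_a]
    rw [Mmul (T i) (hinv i), eps_mul_ne s s' i h, eps_add s s' i h]
    simp
  have h3A : ∀ s i, a s i * a s i = algebraMap ℂ A 2 * a s i := by
    intro s i
    apply Subtype.ext
    rw [hval_mul, hval_a]
    have : ((algebraMap ℂ A 2 * a s i : A) : QOp n) = (2 : ℂ) • ((a s i : A) : QOp n) := by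
      rw [hval_mul]
      rw [Subalgebra.coe_algebraMap, Algebra.algebraMap_eq_smul_one, smul_mul_assoc, one_mul]
    rw [this, hval_a, Mmul (T i) (hinv i), eps_sq]
    module
  -- product relations
  have hTQ : ∀ s i, T' i * Q s = e s i * Q s := by
    intro s i
    rw [hQ]
    simp only
    rw [← Finset.mul_prod_erase Finset.univ (a s) (Finset.mem_univ i), ← mul_assoc,
      ← mul_assoc, h1A s i]
  have hQQ0 : ∀ s s', s ≠ s' → Q s * Q s' = 0 := by
    intro s s' hss
    obtain ⟨i, hi⟩ : ∃ i, s i ≠ s' i := by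
      by_contra h
      push_neg at h
      exact hss (funext h)
    rw [hQ]
    simp only
    rw [← Finset.prod_mul_distrib]
    exact Finset.prod_eq_zero (Finset.mem_univ i) (h2A s s' i hi)
  have hQQ : ∀ s, Q s * Q s = algebraMap ℂ A (2 ^ n) * Q s := by
    intro s
    rw [hQ]
    simp only
    rw [← Finset.prod_mul_distrib]
    have : ∀ i ∈ Finset.univ, a s i * a s i = algebraMap ℂ A 2 * a s i := fun i _ => h3A s i
    rw [Finset.prod_congr rfl this, Finset.prod_mul_distrib, Finset.prod_const,
      ← map_pow]
    simp
  -- trace of Q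
  have htrQ : ∀ s, ((Q s : A) : QOp n).trace = 2 ^ n := by
    intro s
    have hexp : Q s = ∑ S ∈ Finset.univ.powerset,
        (∏ i ∈ S, (e s i * T' i)) * ∏ i ∈ Finset.univ \ S, (1 : A) := by
      rw [hQ]
      simp only
      rw [← Finset.prod_add]
      apply Finset.prod_congr rfl
      intro i _
      rw [ha]
      simp only
      rw [add_comm]
    have hexp2 : ∀ S : Finset (Fin n), ((∏ i ∈ S, (e s i * T' i) : A) : QOp n)
        = (∏ i ∈ S, eps s i) • ((∏ i ∈ S, T' i : A) : QOp n) := by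
      intro S
      rw [Finset.prod_mul_distrib]
      have h' : (∏ i ∈ S, e s i) = algebraMap ℂ A (∏ i ∈ S, eps s i) := by
        rw [he, map_prod]
      rw [h', hval_mul, Subalgebra.coe_algebraMap, Algebra.algebraMap_eq_smul_one,
        smul_mul_assoc, one_mul]
    have hbridge : ∀ S : Finset (Fin n), S.Nonempty →
        ((∏ i ∈ S, T' i : A) : QOp n).trace = 0 := by
      intro S hS
      have h1 : (∏ i ∈ S, T' i : A) = ∏ i, (if i ∈ S then T' i else 1) := by
        rw [Finset.prod_ite_mem Finset.univ S, Finset.univ_inter]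
      have h2 : ((∏ i, (if i ∈ S then T' i else 1) : A) : QOp n)
          = prodPow T (fun i => decide (i ∈ S)) := by
        rw [hlist]
        unfold prodPow
        congr 1
        apply congrArg
        funext i
        by_cases hi : i ∈ S <;> simp [hi] <;> rfl
      have ht : (fun i => decide (i ∈ S)) ≠ (fun _ => false) := by
        obtain ⟨i, hi⟩ := hS
        intro h
        have := congrFun h i
        simp [hi] at this
      rw [h1, h2]
      exact htrProd _ ht
    rw [hexp]
    have hsum : ((∑ S ∈ Finset.univ.powerset,
          (∏ i ∈ S, (e s i * T' i)) * ∏ i ∈ Finset.univ \ S, (1 : A) : A) : QOp n)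
        = ∑ S ∈ Finset.univ.powerset,
            (∏ i ∈ S, eps s i) • ((∏ i ∈ S, T' i : A) : QOp n) := by
      rw [AddSubmonoidClass.coe_finset_sum]
      apply Finset.sum_congr rfl
      intro S _
      rw [Finset.prod_const_one, mul_one, hexp2]
    rw [hsum, Matrix.trace_sum]
    rw [Finset.sum_eq_single ∅]
    · rw [Finset.prod_empty, Finset.prod_empty, one_smul, OneMemClass.coe_one,
        Matrix.trace_one]
      norm_num
    · intro S _ hS
      rw [Matrix.trace_smul, hbridge S (Finset.nonempty_of_ne_empty hS), smul_zero]
    · simp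
  -- star of Q
  have hstarQ : ∀ s, star ((Q s : A) : QOp n) = ((Q s : A) : QOp n) := by
    intro s
    rw [hQ]
    simp only [hlist]
    apply star_list_prod
    · intro M hM
      rw [List.mem_ofFn] at hM
      obtain ⟨i, rfl⟩ := hM
      show star ((a s i : A) : QOp n) = ((a s i : A) : QOp n)
      rw [hval_a]
      rw [Matrix.star_eq_conjTranspose, conjTranspose_add, conjTranspose_smul,
        conjTranspose_one, (hherm i).eq]
      rw [show star (eps s i) = eps s i from eps_conj s i]
    · rw [List.pairwise_ofFn]
      intro i j _
      show Commute ((a s i : A) : QOp n) ((a s j : A) : QOp n)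
      rw [hval_a, hval_a]
      have hXY : Commute (eps s i • T i) (eps s j • T j) :=
        ((hcomm i j).smul_left _).smul_right _
      exact (Commute.one_right _).add_right ((Commute.one_left _).add_left hXY)
  -- matrix-level projectors
  have hc0 : (2 : ℂ) ^ n ≠ 0 := pow_ne_zero _ two_ne_zero
  set c : ℂ := ((2 : ℂ) ^ n)⁻¹ with hc
  set P : (Fin n → Fin 2) → QOp n := fun s => c • ((Q s : A) : QOp n) with hP
  have htrP : ∀ s, (P s).trace = 1 := by
    intro s
    rw [hP]
    simp only [Matrix.trace_smul, htrQ, hc, smul_eq_mul]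
    field_simp
  have hPmul : ∀ s s', P s * P s' = if s = s' then P s else 0 := by
    intro s s'
    by_cases h : s = s'
    · subst h
      rw [if_pos rfl, hP]
      simp only
      rw [smul_mul_smul_comm]
      have hqq : ((Q s : A) : QOp n) * ((Q s : A) : QOp n)
          = (2 : ℂ) ^ n • ((Q s : A) : QOp n) := by
        rw [← hval_mul, hQQ s, hval_mul, Subalgebra.coe_algebraMap,
          Algebra.algebraMap_eq_smul_one, smul_mul_assoc, one_mul]
      rw [hqq, smul_smul]
      congr 1
      rw [hc]
      field_simp
    · rw [if_neg h, hP]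
      simp only
      rw [smul_mul_smul_comm, ← hval_mul, hQQ0 s s' h]
      simp
  have hstarP : ∀ s, star (P s) = P s := by
    intro s
    rw [hP]
    simp only [star_smul, hstarQ]
    congr 1
    rw [hc]
    simp
  have hTP : ∀ i s, T i * P s = eps s i • P s := by
    intro i s
    have hx : T i * ((Q s : A) : QOp n) = eps s i • ((Q s : A) : QOp n) := by
      rw [show T i = ((T' i : A) : QOp n) from rfl, ← hval_mul, hTQ s i, hval_e]
    rw [hP]
    simp only
    rw [mul_smul_comm, hx, smul_comm]
  -- choose nonzero diagonal entries
  have hxs : ∀ s, ∃ x, P s x x ≠ 0 := by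
    intro s
    by_contra h
    push_neg at h
    have h0 : (P s).trace = 0 := by
      unfold Matrix.trace
      simp [Matrix.diag, h]
    rw [htrP s] at h0
    exact one_ne_zero h0
  choose x hx using hxs
  -- inner product identity
  have hip : ∀ s s' (y y' : Fin n → Fin 2),
      ∑ z, (starRingEnd ℂ) (P s z y) * P s' z y' = (P s * P s') y y' := by
    intro s s' y y'
    have hconj : ∀ z, (starRingEnd ℂ) (P s z y) = P s y z := by
      intro z
      have h1 := congrFun (congrFun (hstarP s) y) z
      rw [Matrix.star_apply] at h1
      exact h1
    rw [Matrix.mul_apply]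
    exact Finset.sum_congr rfl fun z _ => by rw [hconj z]
  set ρ : (Fin n → Fin 2) → ℝ := fun s => ∑ z, Complex.normSq (P s z (x s)) with hρ
  have hρc : ∀ s, (ρ s : ℂ) = P s (x s) (x s) := by
    intro s
    have h1 := hip s s (x s) (x s)
    rw [hPmul s s, if_pos rfl] at h1
    rw [← h1, hρ]
    push_cast
    apply Finset.sum_congr rfl
    intro z _
    rw [Complex.normSq_eq_conj_mul_self]
  have hρnn : ∀ s, 0 ≤ ρ s := by
    intro s
    apply Finset.sum_nonneg
    intro z _
    exact Complex.normSq_nonneg _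
  have hρ0 : ∀ s, ρ s ≠ 0 := by
    intro s h
    apply hx s
    rw [← hρc s, h]
    simp
  have hρpos : ∀ s, 0 < ρ s := fun s => lt_of_le_of_ne (hρnn s) (Ne.symm (hρ0 s))
  set U : QOp n := Matrix.of (fun y s => ((Real.sqrt (ρ s) : ℝ) : ℂ)⁻¹ * P s y (x s)) with hU
  have hsq : ∀ s, ((Real.sqrt (ρ s) : ℝ) : ℂ)⁻¹ * ((Real.sqrt (ρ s) : ℝ) : ℂ)⁻¹ * (ρ s : ℂ) = 1 := by
    intro s
    have h1 : Real.sqrt (ρ s) * Real.sqrt (ρ s) = ρ s := Real.mul_self_sqrt (hρnn s)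
    have h2 : Real.sqrt (ρ s) ≠ 0 := by
      rw [Real.sqrt_ne_zero (hρnn s)]
      exact hρ0 s
    have h3 : ((Real.sqrt (ρ s))⁻¹ * (Real.sqrt (ρ s))⁻¹ * ρ s : ℝ) = 1 := by
      rw [← h1]
      field_simp
      rw [Real.sqrt_sq (Real.sqrt_nonneg _)]
    calc ((Real.sqrt (ρ s) : ℝ) : ℂ)⁻¹ * ((Real.sqrt (ρ s) : ℝ) : ℂ)⁻¹ * (ρ s : ℂ)
        = (((Real.sqrt (ρ s))⁻¹ * (Real.sqrt (ρ s))⁻¹ * ρ s : ℝ) : ℂ) := by push_cast; ring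
      _ = 1 := by rw [h3]; norm_num
  have hUU : star U * U = 1 := by
    ext s s'
    rw [Matrix.mul_apply, Matrix.one_apply]
    have hterm : ∀ z, (star U) s z * U z s'
        = (((Real.sqrt (ρ s) : ℝ) : ℂ)⁻¹ * ((Real.sqrt (ρ s') : ℝ) : ℂ)⁻¹)
          * ((starRingEnd ℂ) (P s z (x s)) * P s' z (x s')) := by
      intro z
      rw [Matrix.star_apply, hU]
      simp only [Matrix.of_apply]
      rw [star_mul']
      rw [show star (((Real.sqrt (ρ s) : ℝ) : ℂ)⁻¹) = ((Real.sqrt (ρ s) : ℝ) : ℂ)⁻¹ by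
        rw [← Complex.conj_ofReal (Real.sqrt (ρ s))]
        simp]
      rw [show star (P s z (x s)) = (starRingEnd ℂ) (P s z (x s)) from rfl]
      ring
    rw [Finset.sum_congr rfl fun z _ => hterm z, ← Finset.mul_sum, hip s s' (x s) (x s'),
      hPmul s s']
    by_cases h : s = s'
    · subst h
      rw [if_pos rfl, if_pos rfl, ← hρc s]
      exact hsq s
    · rw [if_neg h, if_neg h]
      simp
  have hUmem : U ∈ Matrix.unitaryGroup (Fin n → Fin 2) ℂ :=
    Matrix.mem_unitaryGroup_iff'.mpr hUU
  have hTU : ∀ i, T i * U = U * ZOp n i := by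
    intro i
    ext y s
    rw [Matrix.mul_apply]
    have hterm : ∀ z, T i y z * U z s
        = ((Real.sqrt (ρ s) : ℝ) : ℂ)⁻¹ * (T i y z * P s z (x s)) := by
      intro z
      rw [hU]
      simp only [Matrix.of_apply]
      ring
    rw [Finset.sum_congr rfl fun z _ => hterm z, ← Finset.mul_sum,
      show ∑ z, T i y z * P s z (x s) = (T i * P s) y (x s) from (Matrix.mul_apply).symm,
      hTP i s, show ZOp n i = Matrix.diagonal (fun v => eps v i) from rfl,
      Matrix.mul_diagonal, hU]
    simp only [Matrix.of_apply, Matrix.smul_apply, smul_eq_mul]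
    ring
  refine ⟨U, hUmem, fun i => ?_⟩
  have hUU' : U * star U = 1 := mul_eq_one_comm.mp hUU
  calc T i = T i * (U * star U) := by rw [hUU', mul_one]
    _ = (T i * U) * star U := by rw [mul_assoc]
    _ = U * ZOp n i * star U := by rw [hTU i]
end

section
/- For the n-qubit hypergraph state |HG⟩ = CZ_n |+⟩^{⊗n}, where CZ_n = I − 2|0⟩⟨0|^{⊗n}, and distinct qubits i ≠ j, the correlation function of X_i and X_j equals (1/2^{n−2})(1 − 1/2^{n−2}). -/
open Matrix BigOperators

-- Auxiliary lemmas ---------------------------------------------------------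

lemma aux_sum_eps {α : Type*} [Fintype α] [DecidableEq α] (σ : α → α) (z : α)
    (hinj : Function.Injective σ) (h1 : σ z ≠ z) (h2 : σ (σ z) = z) :
    ∑ x : α, (if x = z then (-1 : ℂ) else 1) * (if σ x = z then (-1 : ℂ) else 1)
      = (Fintype.card α : ℂ) - 4 := by
  have key : ∀ x : α, (if x = z then (-1 : ℂ) else 1) * (if σ x = z then (-1 : ℂ) else 1)
      = 1 - (if x = z then 2 else 0) - (if x = σ z then 2 else 0) := by
    intro x
    by_cases hx : x = z
    · subst hx
      simp only [if_pos rfl, if_neg h1, if_neg (Ne.symm h1)]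
      norm_num
    · by_cases hx2 : x = σ z
      · subst hx2
        simp only [if_neg hx, if_pos h2, if_pos rfl]
        norm_num
      · have hσ : σ x ≠ z := fun h => hx2 (hinj (h.trans h2.symm))
        simp [hx, hx2, hσ]
  rw [Finset.sum_congr rfl fun x _ => key x]
  rw [Finset.sum_sub_distrib, Finset.sum_sub_distrib]
  simp [Finset.sum_ite_eq', Finset.card_univ]
  ring

lemma aux_hg_sum {n : ℕ} (σ : (Fin n → Fin 2) → (Fin n → Fin 2))
    (hinj : Function.Injective σ) (h1 : σ (fun _ => 0) ≠ (fun _ => 0))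
    (h2 : σ (σ (fun _ => 0)) = (fun _ => 0)) :
    ∑ x, (starRingEnd ℂ) (hgState n x) * hgState n (σ x)
      = ((2 : ℂ) ^ n - 4) * ((2 : ℂ)⁻¹) ^ n := by
  have hc : (starRingEnd ℂ) ((((Real.sqrt 2)⁻¹ : ℝ) : ℂ) ^ n)
      = (((Real.sqrt 2)⁻¹ : ℝ) : ℂ) ^ n := by
    rw [map_pow, Complex.conj_ofReal]
  have h2r : ((Real.sqrt 2)⁻¹ : ℝ) * (Real.sqrt 2)⁻¹ = 2⁻¹ := by
    rw [← mul_inv, Real.mul_self_sqrt (by norm_num : (0:ℝ) ≤ 2)]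
  have hcsq : (((Real.sqrt 2)⁻¹ : ℝ) : ℂ) ^ n * (((Real.sqrt 2)⁻¹ : ℝ) : ℂ) ^ n
      = ((2 : ℂ)⁻¹) ^ n := by
    rw [← mul_pow, ← Complex.ofReal_mul, h2r]
    push_cast
    ring
  have hepsconj : ∀ x : Fin n → Fin 2,
      (starRingEnd ℂ) (if ∀ i, x i = 0 then (-1 : ℂ) else 1)
        = (if x = (fun _ => 0) then (-1 : ℂ) else 1) := by
    intro x
    rw [apply_ite (starRingEnd ℂ)]
    simp [funext_iff]
  have heps : ∀ x : Fin n → Fin 2,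
      (if ∀ i, x i = 0 then (-1 : ℂ) else 1) = (if x = (fun _ => 0) then (-1 : ℂ) else 1) := by
    intro x; simp [funext_iff]
  calc ∑ x, (starRingEnd ℂ) (hgState n x) * hgState n (σ x)
      = ∑ x, ((if x = (fun _ => 0) then (-1 : ℂ) else 1) *
          (if σ x = (fun _ => 0) then (-1 : ℂ) else 1)) *
          ((((Real.sqrt 2)⁻¹ : ℝ) : ℂ) ^ n * (((Real.sqrt 2)⁻¹ : ℝ) : ℂ) ^ n) := by
        refine Finset.sum_congr rfl fun x _ => ?_
        simp only [hgState, _root_.map_mul, hc, hepsconj, heps, apply_ite (starRingEnd ℂ), _root_.map_one, map_neg]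
        ring
    _ = ((2 : ℂ) ^ n - 4) * ((2 : ℂ)⁻¹) ^ n := by
        rw [← Finset.sum_mul, aux_sum_eps σ _ hinj h1 h2, hcsq]
        congr 1
        simp [Fintype.card_fun]

lemma aux_XOp_mulVec {n : ℕ} (i : Fin n) (ψ : QState n) (x : Fin n → Fin 2) :
    (XOp n i).mulVec ψ x = ψ (Function.update x i (x i + 1)) := by
  simp [XOp, Matrix.mulVec, dotProduct, ite_mul, Finset.sum_ite_eq']

lemma aux_fin2 : ∀ a : Fin 2, a + 1 + 1 = a := by decide

lemma aux_fin2' : ∀ a : Fin 2, a + 1 ≠ a := by decide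

def auxFlip {n : ℕ} (i : Fin n) (x : Fin n → Fin 2) : Fin n → Fin 2 :=
  Function.update x i (x i + 1)

lemma auxFlip_apply {n : ℕ} (i k : Fin n) (x : Fin n → Fin 2) :
    auxFlip i x k = if k = i then x k + 1 else x k := by
  rcases eq_or_ne k i with h | h
  · subst h; simp [auxFlip]
  · simp [auxFlip, Function.update_of_ne h, h]

/-- for the hypergraph state `|HG⟩ = CZ_n |+⟩^{⊗n}` and distinct qubits
`i ≠ j`, `Cor(X_i, X_j, |HG⟩) = 2^{-(n-2)}(1 − 2^{-(n-2)})`. -/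
theorem hypergraph_XX_correlation {n : ℕ} (hn : 2 ≤ n) (i j : Fin n) (hij : i ≠ j) :
    Cor (XOp n i) (XOp n j) (hgState n) =
      ((2 : ℂ) ^ (n - 2))⁻¹ * (1 - ((2 : ℂ) ^ (n - 2))⁻¹) := by
  obtain ⟨m, rfl⟩ : ∃ m, n = m + 2 := ⟨n - 2, by omega⟩
  -- properties of single flip
  have hff : ∀ (k : Fin (m + 2)) (x : Fin (m + 2) → Fin 2), auxFlip k (auxFlip k x) = x := by
    intro k x; funext l
    simp only [auxFlip_apply]
    split_ifs <;> simp [aux_fin2]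
  have hσσ : ∀ x : Fin (m + 2) → Fin 2, auxFlip j (auxFlip i (auxFlip j (auxFlip i x))) = x := by
    intro x; funext l
    simp only [auxFlip_apply]
    split_ifs <;> simp_all [aux_fin2]
  have hz : ∀ k : Fin (m + 2), auxFlip k (fun _ => 0) ≠ (fun _ => 0) := by
    intro k h
    have := congrFun h k
    simp [auxFlip_apply] at this
  have hσz : (auxFlip j (auxFlip i (fun _ => 0))) ≠ (fun _ => 0) := by
    intro h
    have := congrFun h i
    simp [auxFlip_apply, hij] at this
  have E1 : ∀ k : Fin (m + 2), expectation (XOp (m + 2) k) (hgState (m + 2))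
      = ((2 : ℂ) ^ (m + 2) - 4) * ((2 : ℂ)⁻¹) ^ (m + 2) := by
    intro k
    unfold expectation
    rw [Finset.sum_congr rfl fun x _ => by rw [aux_XOp_mulVec]]
    exact aux_hg_sum (auxFlip k) (Function.LeftInverse.injective (hff k)) (hz k)
      (hff k _)
  have E2 : expectation (XOp (m + 2) i * XOp (m + 2) j) (hgState (m + 2))
      = ((2 : ℂ) ^ (m + 2) - 4) * ((2 : ℂ)⁻¹) ^ (m + 2) := by
    unfold expectation
    have hmv : ∀ x, (XOp (m + 2) i * XOp (m + 2) j).mulVec (hgState (m + 2)) x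
        = hgState (m + 2) (auxFlip j (auxFlip i x)) := by
      intro x
      rw [← Matrix.mulVec_mulVec, aux_XOp_mulVec, aux_XOp_mulVec]
      rfl
    rw [Finset.sum_congr rfl fun x _ => by rw [hmv]]
    exact aux_hg_sum (fun x => auxFlip j (auxFlip i x))
      (Function.LeftInverse.injective (g := fun x => auxFlip j (auxFlip i x)) hσσ) hσz (hσσ _)
  rw [Cor, E2, E1 i, E1 j]
  have h2 : (2 : ℂ) ^ (m + 2) ≠ 0 := pow_ne_zero _ two_ne_zero
  have hm : (2 : ℂ) ^ m ≠ 0 := pow_ne_zero _ two_ne_zero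
  simp only [Nat.add_sub_cancel, inv_pow]
  field_simp
  ring
end
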